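/- For any quantum state σ (positive semidefinite operator with trace 1) on a finite-dimensional Hilbert space and any operator A with 0 ≤ A ≤ 1, the trace distance satisfies ‖σ - √A σ √A‖₁ ≤ 3·√(1 - Tr(Aσ)). -/

import Mathlib

open Matrix ComplexOrder

/-- The positive semidefinite square root of a positive semidefinite matrix
(the definition `Matrix.PosSemidef.sqrt` of the older Mathlib, since removed). -/
noncomputable def Matrix.PosSemidef.sqrt {n 𝕜 : Type*} [Fintype n] [RCLike 𝕜] [DecidableEq n]
    {A : Matrix n n 𝕜} (hA : A.PosSemidef) : Matrix n n 𝕜 :=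
  hA.1.eigenvectorUnitary.1 * diagonal ((↑) ∘ (√·) ∘ hA.1.eigenvalues) *
  (star hA.1.eigenvectorUnitary : Matrix n n 𝕜)

/-- Trace norm of a complex matrix: the trace of the positive square root of `Mᴴ * M`. -/
noncomputable def traceNorm {n : ℕ} (M : Matrix (Fin n) (Fin n) ℂ) : ℝ :=
  ((Matrix.posSemidef_conjTranspose_mul_self M).sqrt).trace.re

open scoped MatrixOrder in
lemma Matrix.PosSemidef.sqrt_eq_cfcSqrt {n : ℕ} {A : Matrix (Fin n) (Fin n) ℂ}
    (hA : A.PosSemidef) : hA.sqrt = CFC.sqrt A := by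
  rw [CFC.sqrt_eq_cfc, cfc_nnreal_eq_real _ A hA.nonneg, hA.1.cfc_eq]
  simp only [IsHermitian.cfc, Unitary.conjStarAlgAut_apply, Matrix.PosSemidef.sqrt]
  congr 2
  ext i j
  simp only [diagonal_apply]
  split_ifs <;> simp [max_eq_left (hA.eigenvalues_nonneg i)]

open scoped MatrixOrder in
lemma Matrix.PosSemidef.sqrt_mul_self {n : ℕ} {A : Matrix (Fin n) (Fin n) ℂ}
    (hA : A.PosSemidef) : hA.sqrt * hA.sqrt = A := by
  rw [hA.sqrt_eq_cfcSqrt]; exact CFC.sqrt_mul_sqrt_self A hA.nonneg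

open scoped MatrixOrder in
lemma Matrix.PosSemidef.posSemidef_sqrt {n : ℕ} {A : Matrix (Fin n) (Fin n) ℂ}
    (hA : A.PosSemidef) : hA.sqrt.PosSemidef := by
  rw [hA.sqrt_eq_cfcSqrt]; exact Matrix.nonneg_iff_posSemidef.mp (CFC.sqrt_nonneg A)

open scoped MatrixOrder in
lemma Matrix.PosSemidef.eq_sqrt_of_sq_eq {n : ℕ} {B A : Matrix (Fin n) (Fin n) ℂ}
    (hB : B.PosSemidef) (hA : A.PosSemidef) (h : B ^ 2 = A) : B = hA.sqrt := by
  rw [hA.sqrt_eq_cfcSqrt]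
  exact (CFC.sqrt_unique (by rw [← pow_two]; exact h) hB.nonneg).symm

section Helpers

variable {n : ℕ}

/-- The real part of the trace of a positive semidefinite matrix is nonnegative. -/
lemma trace_psd_re_nonneg {M : Matrix (Fin n) (Fin n) ℂ} (hM : M.PosSemidef) :
    0 ≤ M.trace.re := by
  have h : ∀ i, 0 ≤ (M i i).re := by
    intro i
    have := hM.dotProduct_mulVec_nonneg (Pi.single i 1)
    have hd : star (Pi.single i 1 : Fin n → ℂ) ⬝ᵥ M *ᵥ Pi.single i 1 = M i i := by
      simp [dotProduct, mulVec, Pi.single_apply, Finset.sum_ite_eq]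
    rw [hd] at this
    exact (Complex.le_def.mp this).1
  rw [Matrix.trace, Complex.re_sum]
  exact Finset.sum_nonneg fun i _ => h i

/-- The trace of a product of positive semidefinite matrices has nonnegative real part. -/
lemma trace_mul_psd_nonneg {M σ : Matrix (Fin n) (Fin n) ℂ} (hM : M.PosSemidef)
    (hσ : σ.PosSemidef) : 0 ≤ ((M * σ).trace).re := by
  have h1 : (M * σ).trace = (hσ.sqrt * M * hσ.sqrt).trace := by
    conv_lhs => rw [← hσ.sqrt_mul_self]
    rw [← Matrix.mul_assoc, trace_mul_cycle]
  rw [h1]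
  have h2 : (hσ.sqrt * M * hσ.sqrt).PosSemidef := by
    have := hM.conjTranspose_mul_mul_same hσ.sqrt
    rwa [hσ.posSemidef_sqrt.1.eq] at this
  exact trace_psd_re_nonneg h2

/-- Frobenius norm of a complex matrix. -/
noncomputable def fro (M : Matrix (Fin n) (Fin n) ℂ) : ℝ :=
  Real.sqrt ((Mᴴ * M).trace.re)

lemma tr_herm_prod (X Y : Matrix (Fin n) (Fin n) ℂ) :
    (Xᴴ * Y).trace = ∑ p : Fin n × Fin n, (starRingEnd ℂ) (X p.1 p.2) * Y p.1 p.2 := by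
  rw [Matrix.trace, Fintype.sum_prod_type]
  simp only [Matrix.diag, Matrix.mul_apply, Matrix.conjTranspose_apply]
  rw [Finset.sum_comm]; rfl

lemma fro_sq_eq (M : Matrix (Fin n) (Fin n) ℂ) :
    (Mᴴ * M).trace.re = ∑ p : Fin n × Fin n, ‖M p.1 p.2‖ ^ 2 := by
  rw [tr_herm_prod, Complex.re_sum]
  congr 1; ext p
  rw [mul_comm, Complex.mul_conj]
  simp [Complex.sq_norm, ← Complex.normSq_eq_norm_sq]

lemma fro_nonneg_tr (M : Matrix (Fin n) (Fin n) ℂ) : 0 ≤ (Mᴴ * M).trace.re := by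
  rw [fro_sq_eq]; positivity

lemma fro_nonneg (M : Matrix (Fin n) (Fin n) ℂ) : 0 ≤ fro M := Real.sqrt_nonneg _

/-- Cauchy-Schwarz for the Frobenius inner product. -/
lemma fro_cs (X Y : Matrix (Fin n) (Fin n) ℂ) :
    ((Xᴴ * Y).trace).re ≤ fro X * fro Y := by
  classical
  let f : EuclideanSpace ℂ (Fin n × Fin n) := WithLp.toLp 2 (fun p : Fin n × Fin n => X p.1 p.2)
  let g : EuclideanSpace ℂ (Fin n × Fin n) := WithLp.toLp 2 (fun p : Fin n × Fin n => Y p.1 p.2)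
  have hinner : (Xᴴ * Y).trace = inner ℂ f g := by
    rw [tr_herm_prod]
    simp only [PiLp.inner_apply, RCLike.inner_apply, PiLp.toLp_apply, f, g]
    exact Finset.sum_congr rfl fun p _ => mul_comm _ _
  have h1 : ((Xᴴ * Y).trace).re ≤ ‖(inner ℂ f g : ℂ)‖ := by
    rw [hinner]; exact Complex.re_le_norm _
  have h2 : ‖(inner ℂ f g : ℂ)‖ ≤ ‖f‖ * ‖g‖ := norm_inner_le_norm f g
  have hf : ‖f‖ = fro X := by
    rw [EuclideanSpace.norm_eq, fro, fro_sq_eq]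
  have hg : ‖g‖ = fro Y := by
    rw [EuclideanSpace.norm_eq, fro, fro_sq_eq]
  calc ((Xᴴ * Y).trace).re ≤ ‖(inner ℂ f g : ℂ)‖ := h1
    _ ≤ ‖f‖ * ‖g‖ := h2
    _ = fro X * fro Y := by rw [hf, hg]

lemma fro_conjTranspose (M : Matrix (Fin n) (Fin n) ℂ) : fro Mᴴ = fro M := by
  unfold fro
  rw [conjTranspose_conjTranspose, trace_mul_comm]

/-- Multiplication by a contraction does not increase the Frobenius norm. -/
lemma fro_mul_le {C : Matrix (Fin n) (Fin n) ℂ}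
    (hC : ((1 : Matrix (Fin n) (Fin n) ℂ) - Cᴴ * C).PosSemidef)
    (X : Matrix (Fin n) (Fin n) ℂ) : fro (C * X) ≤ fro X := by
  unfold fro
  apply Real.sqrt_le_sqrt
  have hpsd : (Xᴴ * ((1 : Matrix (Fin n) (Fin n) ℂ) - Cᴴ * C) * X).PosSemidef :=
    hC.conjTranspose_mul_mul_same X
  have h := trace_psd_re_nonneg hpsd
  have hexp : Xᴴ * ((1 : Matrix (Fin n) (Fin n) ℂ) - Cᴴ * C) * X
      = Xᴴ * X - (C * X)ᴴ * (C * X) := by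
    rw [Matrix.mul_sub, Matrix.sub_mul, Matrix.mul_one, conjTranspose_mul]
    rw [Matrix.mul_assoc, Matrix.mul_assoc, Matrix.mul_assoc]
  rw [hexp, trace_sub] at h
  have := Complex.sub_re ((Xᴴ * X).trace) (((C * X)ᴴ * (C * X)).trace)
  linarith [h, this ▸ h]

end Helpers

section Helpers2

variable {n : ℕ}

/-- For a Hermitian matrix the trace norm is attained as `Re (tr (W D))` for a unitary `W`. -/
lemma exists_sign_unitary {D : Matrix (Fin n) (Fin n) ℂ} (hD : D.IsHermitian) :
    ∃ W : Matrix (Fin n) (Fin n) ℂ, Wᴴ * W = 1 ∧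
      traceNorm D = ((W * D).trace).re := by
  classical
  set U : Matrix (Fin n) (Fin n) ℂ := (hD.eigenvectorUnitary : Matrix (Fin n) (Fin n) ℂ) with hU
  set d : Fin n → ℝ := hD.eigenvalues with hd
  have hU1 : star U * U = 1 := Unitary.coe_star_mul_self _
  have hU2 : U * star U = 1 := Unitary.coe_mul_star_self _
  have key : ∀ f g : Fin n → ℂ,
      (U * diagonal f * star U) * (U * diagonal g * star U)
        = U * diagonal (fun i => f i * g i) * star U := by
    intro f g
    have h1 : star U * (U * diagonal g * star U) = diagonal g * star U := by
      rw [← Matrix.mul_assoc, ← Matrix.mul_assoc, hU1, Matrix.one_mul]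
    rw [Matrix.mul_assoc (U * diagonal f), h1, ← Matrix.mul_assoc,
      Matrix.mul_assoc U, diagonal_mul_diagonal]
  have trace_conj : ∀ f : Fin n → ℂ, (U * diagonal f * star U).trace = ∑ i, f i := by
    intro f
    rw [trace_mul_cycle, hU1, Matrix.one_mul, trace_diagonal]
  set s : Fin n → ℝ := fun i => if d i < 0 then -1 else 1 with hs
  have hsd : ∀ i, s i * d i = |d i| := by
    intro i
    by_cases h : d i < 0
    · simp [hs, h, abs_of_neg h]
    · simp [hs, h, abs_of_nonneg (not_lt.mp h)]
  have hss : ∀ i, s i * s i = 1 := by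
    intro i; by_cases h : d i < 0 <;> simp [hs, h]
  set W : Matrix (Fin n) (Fin n) ℂ := U * diagonal (fun i => (s i : ℂ)) * star U with hW
  have hWherm : Wᴴ = W := by
    rw [hW, conjTranspose_mul, conjTranspose_mul, diagonal_conjTranspose]
    rw [star_eq_conjTranspose, conjTranspose_conjTranspose, ← star_eq_conjTranspose U]
    have : star (fun i => (s i : ℂ)) = fun i => (s i : ℂ) := by
      funext i; simp [Complex.conj_ofReal]
    rw [this, Matrix.mul_assoc]
  refine ⟨W, ?_, ?_⟩
  · rw [hWherm, hW, key]
    have : (fun i => (s i : ℂ) * (s i : ℂ)) = fun _ => (1 : ℂ) := by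
      funext i
      rw [← Complex.ofReal_mul, hss i, Complex.ofReal_one]
    rw [this, diagonal_one, Matrix.mul_one, hU2]
  · -- trace norm computation
    set C : Matrix (Fin n) (Fin n) ℂ := U * diagonal (fun i => ((|d i| : ℝ) : ℂ)) * star U with hC
    have hCpsd : C.PosSemidef := by
      have hdiag : (diagonal (fun i => ((|d i| : ℝ) : ℂ))).PosSemidef :=
        posSemidef_diagonal_iff.mpr fun i => by
          rw [Complex.zero_le_real]; exact abs_nonneg _
      have := hdiag.mul_mul_conjTranspose_same U
      rwa [← star_eq_conjTranspose U] at this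
    have hspec : D = U * diagonal (fun i => (d i : ℂ)) * star U := by
      have := hD.spectral_theorem
      rw [Unitary.conjStarAlgAut_apply] at this
      exact this
    have hC2 : C ^ 2 = Dᴴ * D := by
      have habs : (fun i => ((|d i| : ℝ) : ℂ) * ((|d i| : ℝ) : ℂ))
          = (fun i => ((d i : ℝ) : ℂ) * ((d i : ℝ) : ℂ)) := by
        funext i
        rw [← Complex.ofReal_mul, ← Complex.ofReal_mul, abs_mul_abs_self]
      rw [hD.eq, pow_two, hC, key, hspec, key, habs]
    have hCs : C = (posSemidef_conjTranspose_mul_self D).sqrt :=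
      hCpsd.eq_sqrt_of_sq_eq _ hC2
    have hWD : W * D = U * diagonal (fun i => ((|d i| : ℝ) : ℂ)) * star U := by
      have habs2 : (fun i => ((s i : ℝ) : ℂ) * ((d i : ℝ) : ℂ))
          = (fun i => ((|d i| : ℝ) : ℂ)) := by
        funext i
        rw [← Complex.ofReal_mul, hsd i]
      rw [hW, hspec, key, habs2]
    rw [traceNorm, ← hCs, hWD, hC, trace_conj]

/-- Eigenvalues of a psd matrix `A` with `1 - A` psd are at most `1`. -/
lemma eig_le_one {A : Matrix (Fin n) (Fin n) ℂ} (hA : A.PosSemidef)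
    (hA1 : ((1 : Matrix (Fin n) (Fin n) ℂ) - A).PosSemidef) (i : Fin n) :
    hA.1.eigenvalues i ≤ 1 := by
  classical
  set v : Fin n → ℂ := ⇑(hA.1.eigenvectorBasis i) with hv
  have hnorm : star v ⬝ᵥ v = 1 := by
    have h1 : (inner ℂ (hA.1.eigenvectorBasis i) (hA.1.eigenvectorBasis i) : ℂ)
        = star v ⬝ᵥ v := by rw [EuclideanSpace.inner_eq_star_dotProduct, dotProduct_comm]
    rw [← h1, inner_self_eq_norm_sq_to_K, hA.1.eigenvectorBasis.orthonormal.1 i]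
    norm_num
  have hmul : A *ᵥ v = (hA.1.eigenvalues i : ℝ) • v := hA.1.mulVec_eigenvectorBasis i
  have h := hA1.dotProduct_mulVec_nonneg v
  have hcalc : star v ⬝ᵥ ((1 : Matrix (Fin n) (Fin n) ℂ) - A) *ᵥ v
      = 1 - (hA.1.eigenvalues i : ℂ) := by
    rw [Matrix.sub_mulVec, Matrix.one_mulVec, dotProduct_sub, hmul, dotProduct_smul, hnorm]
    simp [Complex.real_smul]
  rw [hcalc] at h
  have := Complex.le_def.mp h
  simp only [Complex.zero_re, Complex.sub_re, Complex.one_re, Complex.ofReal_re] at this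
  linarith [this.1]

/-- If `0 ≤ A ≤ 1` then `√A - A` is positive semidefinite. -/
lemma sqrt_sub_psd {A : Matrix (Fin n) (Fin n) ℂ} (hA : A.PosSemidef)
    (hA1 : ((1 : Matrix (Fin n) (Fin n) ℂ) - A).PosSemidef) :
    (hA.sqrt - A).PosSemidef := by
  classical
  set U : Matrix (Fin n) (Fin n) ℂ := (hA.1.eigenvectorUnitary : Matrix (Fin n) (Fin n) ℂ)
    with hU
  set a : Fin n → ℝ := hA.1.eigenvalues with ha
  have hsq : hA.sqrt = U * diagonal (fun i => ((Real.sqrt (a i) : ℝ) : ℂ)) * star U := rfl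
  have hspec : A = U * diagonal (fun i => ((a i : ℝ) : ℂ)) * star U := by
    have := hA.1.spectral_theorem
    rw [Unitary.conjStarAlgAut_apply] at this
    exact this
  have hdiff : hA.sqrt - A
      = U * diagonal (fun i => ((Real.sqrt (a i) - a i : ℝ) : ℂ)) * star U := by
    rw [hsq]
    conv_lhs => rw [hspec]
    rw [← Matrix.sub_mul, ← Matrix.mul_sub, diagonal_sub]
    congr 2
    funext i
    push_cast
    ring
  rw [hdiff]
  have hdpsd : (diagonal (fun i => ((Real.sqrt (a i) - a i : ℝ) : ℂ))).PosSemidef := by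
    refine posSemidef_diagonal_iff.mpr fun i => ?_
    rw [Complex.zero_le_real, sub_nonneg]
    have h0 : 0 ≤ a i := hA.eigenvalues_nonneg i
    have h1 : a i ≤ 1 := eig_le_one hA hA1 i
    calc a i = Real.sqrt ((a i) ^ 2) := (Real.sqrt_sq h0).symm
      _ ≤ Real.sqrt (a i) := Real.sqrt_le_sqrt (by nlinarith)
  have := hdpsd.mul_mul_conjTranspose_same U
  rwa [← star_eq_conjTranspose U] at this

end Helpers2

/-- Gentle measurement lemma: if `σ` is a density matrix and `0 ≤ A ≤ 1`, then
`‖σ - √A σ √A‖₁ ≤ 3 √(1 - Tr(Aσ))`. -/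
theorem gentle_measurement {n : ℕ} (σ A : Matrix (Fin n) (Fin n) ℂ)
    (hσ : σ.PosSemidef) (hσtr : σ.trace = 1)
    (hA : A.PosSemidef) (hA1 : ((1 : Matrix (Fin n) (Fin n) ℂ) - A).PosSemidef) :
    traceNorm (σ - hA.sqrt * σ * hA.sqrt) ≤ 3 * Real.sqrt (1 - ((A * σ).trace).re) := by
  classical
  set B := hA.sqrt with hBdef
  have hB : B.PosSemidef := hA.posSemidef_sqrt
  have hBH : Bᴴ = B := hB.1
  have hBB : B * B = A := hA.sqrt_mul_self
  set R := hσ.sqrt with hRdef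
  have hRH : Rᴴ = R := hσ.posSemidef_sqrt.1
  have hRR : R * R = σ := hσ.sqrt_mul_self
  set E := (1 : Matrix (Fin n) (Fin n) ℂ) - B with hEdef
  have hEH : Eᴴ = E := by rw [hEdef, conjTranspose_sub, conjTranspose_one, hBH]
  set t := ((A * σ).trace).re with htdef
  have ht0 : 0 ≤ t := trace_mul_psd_nonneg hA hσ
  have ht1 : t ≤ 1 := by
    have h := trace_mul_psd_nonneg hA1 hσ
    rw [Matrix.sub_mul, Matrix.one_mul, trace_sub, Complex.sub_re, hσtr] at h
    simp only [Complex.one_re] at h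
    linarith
  have hBAtr : t ≤ ((B * σ).trace).re := by
    have h := trace_mul_psd_nonneg (sqrt_sub_psd hA hA1) hσ
    rw [Matrix.sub_mul, trace_sub, Complex.sub_re] at h
    linarith
  have key1 : ((E * E * σ).trace).re ≤ 1 - t := by
    have hEE : E * E = 1 - B - B + A := by
      rw [hEdef, ← hBB]
      noncomm_ring
    rw [hEE, Matrix.add_mul, Matrix.sub_mul, Matrix.sub_mul, Matrix.one_mul, trace_add,
      trace_sub, trace_sub, Complex.add_re, Complex.sub_re, Complex.sub_re, hσtr]
    simp only [Complex.one_re]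
    linarith
  -- Frobenius norm bounds
  have froR : fro R = 1 := by
    rw [fro, hRH, hRR, hσtr]
    simp
  have trER : ((E * R)ᴴ * (E * R)).trace = (E * E * σ).trace := by
    rw [conjTranspose_mul, hEH, hRH, trace_mul_comm]
    have h1 : (E * R) * (R * E) = (E * σ) * E := by
      rw [← hRR]; simp [Matrix.mul_assoc]
    rw [h1, trace_mul_comm, ← Matrix.mul_assoc]
  have froER : fro (E * R) ≤ Real.sqrt (1 - t) := by
    rw [fro, trER]
    exact Real.sqrt_le_sqrt key1
  have trBR : ((B * R)ᴴ * (B * R)).trace = (A * σ).trace := by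
    rw [conjTranspose_mul, hBH, hRH, trace_mul_comm]
    have h1 : (B * R) * (R * B) = (B * σ) * B := by
      rw [← hRR]; simp [Matrix.mul_assoc]
    rw [h1, trace_mul_comm, ← Matrix.mul_assoc, hBB]
  have froBR : fro (B * R) = Real.sqrt t := by rw [fro, trBR]
  -- Hermitian difference and sign unitary
  have hD : (σ - B * σ * B).IsHermitian := by
    apply IsHermitian.sub hσ.1
    show (B * σ * B)ᴴ = B * σ * B
    rw [conjTranspose_mul, conjTranspose_mul, hBH, hσ.1.eq, Matrix.mul_assoc]
  obtain ⟨W, hWu, hWeq⟩ := exists_sign_unitary hD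
  have hWC : ((1 : Matrix (Fin n) (Fin n) ℂ) - Wᴴ * W).PosSemidef := by
    rw [hWu, sub_self]; exact Matrix.PosSemidef.zero
  have hsplit : σ - B * σ * B = E * σ + B * σ * E := by
    rw [hEdef, Matrix.sub_mul, Matrix.one_mul, Matrix.mul_sub, Matrix.mul_one]
    abel
  have hterm1 : ((W * (E * σ)).trace).re ≤ Real.sqrt (1 - t) := by
    have heq : W * (E * σ) = (W * (E * R))ᴴᴴ * R := by
      rw [conjTranspose_conjTranspose, ← hRR]
      simp [Matrix.mul_assoc]
    calc ((W * (E * σ)).trace).re = (((W * (E * R))ᴴᴴ * R).trace).re := by rw [heq]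
      _ ≤ fro ((W * (E * R))ᴴ) * fro R := fro_cs _ _
      _ = fro (W * (E * R)) := by rw [fro_conjTranspose, froR, mul_one]
      _ ≤ fro (E * R) := fro_mul_le hWC _
      _ ≤ Real.sqrt (1 - t) := froER
  have hterm2 : ((W * (B * σ * E)).trace).re ≤ Real.sqrt t * Real.sqrt (1 - t) := by
    have heq : W * (B * σ * E) = (W * (B * R))ᴴᴴ * (R * E) := by
      rw [conjTranspose_conjTranspose, ← hRR]
      simp [Matrix.mul_assoc]
    have hfroRE : fro (R * E) = fro (E * R) := by
      rw [← fro_conjTranspose (R * E), conjTranspose_mul, hEH, hRH]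
    calc ((W * (B * σ * E)).trace).re = (((W * (B * R))ᴴᴴ * (R * E)).trace).re := by rw [heq]
      _ ≤ fro ((W * (B * R))ᴴ) * fro (R * E) := fro_cs _ _
      _ = fro (W * (B * R)) * fro (E * R) := by rw [fro_conjTranspose, hfroRE]
      _ ≤ fro (B * R) * fro (E * R) :=
          mul_le_mul_of_nonneg_right (fro_mul_le hWC _) (fro_nonneg _)
      _ ≤ Real.sqrt t * Real.sqrt (1 - t) := by
          rw [froBR]
          exact mul_le_mul_of_nonneg_left froER (Real.sqrt_nonneg _)
  have hfinal : traceNorm (σ - B * σ * B)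
      ≤ Real.sqrt (1 - t) + Real.sqrt t * Real.sqrt (1 - t) := by
    rw [hWeq]
    conv_lhs => rw [hsplit]
    rw [Matrix.mul_add, trace_add, Complex.add_re]
    exact add_le_add hterm1 hterm2
  have h3 : Real.sqrt t * Real.sqrt (1 - t) ≤ Real.sqrt (1 - t) := by
    have hst : Real.sqrt t ≤ 1 := Real.sqrt_le_one.mpr ht1
    nlinarith [Real.sqrt_nonneg (1 - t), Real.sqrt_nonneg t]
  have hpos : 0 ≤ Real.sqrt (1 - t) := Real.sqrt_nonneg _
  linarith
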